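/- For every n ≥ 1, the asymptotic dimension of ℤⁿ, equipped with the metric restricted from the Euclidean metric on ℝⁿ, is exactly n: ℤⁿ has asymptotic dimension at most n, and does not have asymptotic dimension at most n−1. -/

import Mathlib

/-- A space with distance function `d` has asymptotic dimension at most `n`:
for every `r > 0` there is a uniformly bounded cover such that every `r`-ball
meets at most `n + 1` members of the cover. -/
def AsdimLE {X : Type*} (d : X → X → ℝ) (n : ℕ) : Prop :=
  ∀ r : ℝ, 0 < r → ∃ 𝒰 : Set (Set X),
    (∀ x : X, ∃ U ∈ 𝒰, x ∈ U) ∧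
    (∃ B : ℝ, ∀ U ∈ 𝒰, ∀ x ∈ U, ∀ y ∈ U, d x y ≤ B) ∧
    (∀ x : X, {U | U ∈ 𝒰 ∧ ∃ y ∈ U, d x y ≤ r}.Finite ∧
      {U | U ∈ 𝒰 ∧ ∃ y ∈ U, d x y ≤ r}.ncard ≤ n + 1)

/-- The Euclidean distance on `ℤⁿ`, restricted from `ℝⁿ`. -/
noncomputable def eucDistZ (n : ℕ) (x y : Fin n → ℤ) : ℝ :=
  Real.sqrt (∑ i, ((x i : ℝ) - (y i : ℝ)) ^ 2)

namespace AsdimProof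

open Finset Function

def vtx {d : ℕ} (z : Fin d → ℕ) (σ : Equiv.Perm (Fin d)) (k : Fin (d+1)) : Fin d → ℕ :=
  fun i => z i + if ((σ.symm i : ℕ) < (k : ℕ)) then 1 else 0

def IsDoorFn {d : ℕ} (L : Fin (d+1) → Fin (d+1)) (k : Fin (d+1)) : Prop :=
  (∀ j, j ≠ k → L j ≠ Fin.last d) ∧ (∀ c, c ≠ Fin.last d → ∃ j, j ≠ k ∧ L j = c)

lemma door_reindex {d : ℕ} (L L' : Fin (d+1) → Fin (d+1)) (e : Equiv.Perm (Fin (d+1)))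
    (k' : Fin (d+1)) (h : ∀ j, j ≠ k' → L' j = L (e j)) :
    IsDoorFn L' k' ↔ IsDoorFn L (e k') := by
  constructor
  · rintro ⟨h1, h2⟩
    constructor
    · intro j hj
      have hs : e.symm j ≠ k' := fun hh => hj (by rw [← hh, Equiv.apply_symm_apply])
      have := h1 _ hs
      rwa [h _ hs, Equiv.apply_symm_apply] at this
    · intro c hc
      obtain ⟨j, hjk, hjc⟩ := h2 c hc
      exact ⟨e j, fun hh => hjk (e.injective hh), by rw [← h j hjk, hjc]⟩
  · rintro ⟨h1, h2⟩
    constructor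
    · intro j hj
      rw [h j hj]
      exact h1 _ (fun hh => hj (e.injective hh))
    · intro c hc
      obtain ⟨j, hjk, hjc⟩ := h2 c hc
      have hs : e.symm j ≠ k' := fun hh => hjk (by rw [← hh, Equiv.apply_symm_apply])
      exact ⟨e.symm j, hs, by rw [h _ hs, Equiv.apply_symm_apply, hjc]⟩

lemma door_congr {d : ℕ} (L L' : Fin (d+1) → Fin (d+1)) (k : Fin (d+1))
    (h : ∀ j, j ≠ k → L' j = L j) : IsDoorFn L' k ↔ IsDoorFn L k := by
  simpa using door_reindex L L' 1 k h

def succAt {d N : ℕ} (z : Fin d → Fin N) (i0 : Fin d) : Fin d → Fin N :=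
  Function.update z i0 (if h : (z i0 : ℕ) + 1 < N then ⟨(z i0 : ℕ) + 1, h⟩ else z i0)

def predAt {d N : ℕ} (z : Fin d → Fin N) (i0 : Fin d) : Fin d → Fin N :=
  Function.update z i0 ⟨(z i0 : ℕ) - 1, lt_of_le_of_lt (Nat.sub_le _ _) (z i0).isLt⟩

lemma succAt_val {d N : ℕ} (z : Fin d → Fin N) (i0 : Fin d) (h : (z i0 : ℕ) + 1 < N) :
    ((succAt z i0 i0 : Fin N) : ℕ) = (z i0 : ℕ) + 1 := by
  simp [succAt, h]

lemma succAt_ne {d N : ℕ} (z : Fin d → Fin N) (i0 i : Fin d) (h : i ≠ i0) :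
    succAt z i0 i = z i := Function.update_of_ne h _ _

lemma predAt_val {d N : ℕ} (z : Fin d → Fin N) (i0 : Fin d) :
    ((predAt z i0 i0 : Fin N) : ℕ) = (z i0 : ℕ) - 1 := by
  simp [predAt]

lemma predAt_ne {d N : ℕ} (z : Fin d → Fin N) (i0 i : Fin d) (h : i ≠ i0) :
    predAt z i0 i = z i := Function.update_of_ne h _ _

lemma predAt_succAt {d N : ℕ} (z : Fin d → Fin N) (i0 : Fin d) (h : (z i0 : ℕ) + 1 < N) :
    predAt (succAt z i0) i0 = z := by
  funext i
  by_cases hi : i = i0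
  · subst hi
    apply Fin.ext
    rw [predAt_val, succAt_val _ _ h]
    omega
  · rw [predAt_ne _ _ _ hi, succAt_ne _ _ _ hi]

lemma succAt_predAt {d N : ℕ} (z : Fin d → Fin N) (i0 : Fin d) (h : 1 ≤ (z i0 : ℕ)) :
    succAt (predAt z i0) i0 = z := by
  funext i
  by_cases hi : i = i0
  · subst hi
    apply Fin.ext
    have h2 : ((predAt z i i : Fin N) : ℕ) + 1 < N := by
      rw [predAt_val]
      have := (z i).isLt
      omega
    rw [succAt_val _ _ h2, predAt_val]
    omega
  · rw [succAt_ne _ _ _ hi, predAt_ne _ _ _ hi]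

lemma mul_symm_apply {d : ℕ} (σ e : Equiv.Perm (Fin d)) (i : Fin d) :
    (σ * e).symm i = e.symm (σ.symm i) := by
  rw [Equiv.Perm.mul_def, Equiv.symm_trans_apply]

lemma finRotate_symm_val {n : ℕ} (p : Fin (n+1)) :
    (((finRotate (n+1)).symm p : Fin (n+1)) : ℕ) = if p = 0 then n else (p : ℕ) - 1 := by
  obtain ⟨q, hq⟩ : ∃ q, finRotate (n+1) q = p := ⟨_, Equiv.apply_symm_apply _ p⟩
  rw [← hq, Equiv.symm_apply_apply, finRotate_succ_apply]
  have hval := Fin.val_add_one q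
  by_cases hql : q = Fin.last n
  · rw [if_pos]
    · rw [hql]; rfl
    · apply Fin.ext
      rw [hval, if_pos hql]
      rfl
  · rw [if_neg hql] at hval
    have h1 : q + 1 ≠ 0 := by
      intro h
      rw [Fin.ext_iff, hval] at h
      simp at h
    rw [if_neg h1, hval]
    omega

-- extension/restriction of permutations at the last element
def extLast {m : ℕ} (σ : Equiv.Perm (Fin m)) : Equiv.Perm (Fin (m+1)) :=
  Equiv.permCongr finSuccEquivLast.symm (Equiv.optionCongr σ)

lemma extLast_castSucc {m : ℕ} (σ : Equiv.Perm (Fin m)) (i : Fin m) :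
    extLast σ (Fin.castSucc i) = Fin.castSucc (σ i) := by
  simp [extLast, Equiv.permCongr_apply]

lemma extLast_last {m : ℕ} (σ : Equiv.Perm (Fin m)) :
    extLast σ (Fin.last m) = Fin.last m := by
  simp [extLast, Equiv.permCongr_apply]

def restrLast {m : ℕ} (σ : Equiv.Perm (Fin (m+1))) : Equiv.Perm (Fin m) :=
  (Equiv.permCongr finSuccEquivLast σ).removeNone

lemma restrLast_spec {m : ℕ} (σ : Equiv.Perm (Fin (m+1))) (hfix : σ (Fin.last m) = Fin.last m)
    (i : Fin m) : Fin.castSucc (restrLast σ i) = σ (Fin.castSucc i) := by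
  have hne : σ (Fin.castSucc i) ≠ Fin.last m := by
    intro h
    have := σ.injective (h.trans hfix.symm)
    exact absurd this (Fin.castSucc_lt_last i).ne
  set e := Equiv.permCongr finSuccEquivLast σ with he
  have hsome : e (some i) = some ((σ (Fin.castSucc i)).castPred hne) := by
    rw [he, Equiv.permCongr_apply, finSuccEquivLast_symm_some, ← Equiv.eq_symm_apply,
      finSuccEquivLast_symm_some, Fin.castSucc_castPred]
  have h2 := Equiv.removeNone_some e ⟨_, hsome⟩
  rw [hsome] at h2
  have h3 : e.removeNone i = (σ (Fin.castSucc i)).castPred hne :=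
    Option.some_injective _ h2
  show Fin.castSucc ((Equiv.permCongr finSuccEquivLast σ).removeNone i) = _
  rw [← he, h3, Fin.castSucc_castPred]

lemma extLast_restrLast {m : ℕ} (σ : Equiv.Perm (Fin (m+1)))
    (hfix : σ (Fin.last m) = Fin.last m) : extLast (restrLast σ) = σ := by
  apply Equiv.ext
  intro x
  refine Fin.lastCases ?_ ?_ x
  · rw [extLast_last]
    exact hfix.symm
  · intro i
    rw [extLast_castSucc, restrLast_spec σ hfix]

lemma restrLast_extLast {m : ℕ} (σ' : Equiv.Perm (Fin m)) :
    restrLast (extLast σ') = σ' := by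
  apply Equiv.ext
  intro i
  have h1 : extLast σ' (Fin.last m) = Fin.last m := extLast_last σ'
  have := restrLast_spec (extLast σ') h1 i
  rw [extLast_castSucc] at this
  exact Fin.castSucc_injective _ this

lemma symm_fix {m : ℕ} (σ : Equiv.Perm (Fin (m+1))) (hfix : σ (Fin.last m) = Fin.last m) :
    σ.symm (Fin.last m) = Fin.last m := by
  exact (Equiv.symm_apply_eq σ).2 hfix.symm

lemma symm_castSucc {m : ℕ} (σ : Equiv.Perm (Fin (m+1))) (hfix : σ (Fin.last m) = Fin.last m)
    (i : Fin m) : σ.symm (Fin.castSucc i) = Fin.castSucc ((restrLast σ).symm i) := by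
  rw [Equiv.symm_apply_eq, ← restrLast_spec σ hfix, Equiv.apply_symm_apply]


lemma vtx_le {d N : ℕ} (z : Fin d → Fin N) (σ : Equiv.Perm (Fin d)) (k : Fin (d+1)) (i : Fin d) :
    vtx (fun i => (z i : ℕ)) σ k i ≤ N := by
  simp only [vtx]
  have := (z i).isLt
  split <;> omega

lemma vtx_mid {d N : ℕ} (z : Fin d → Fin N) (σ : Equiv.Perm (Fin d)) (a b : Fin d)
    (k : Fin (d+1)) (ha : (a : ℕ) + 1 = (k : ℕ)) (hb : (b : ℕ) = (k : ℕ))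
    (j : Fin (d+1)) (hj : j ≠ k) :
    vtx (fun i => (z i : ℕ)) (σ * Equiv.swap a b) j = vtx (fun i => (z i : ℕ)) σ j := by
  funext i
  have hvj : (j : ℕ) ≠ (k : ℕ) := fun h => hj (Fin.ext h)
  simp only [vtx]
  rw [mul_symm_apply, Equiv.symm_swap]
  congr 1
  by_cases h1 : σ.symm i = a
  · rw [h1, Equiv.swap_apply_left]
    exact if_congr (by omega) rfl rfl
  · by_cases h2 : σ.symm i = b
    · rw [h2, Equiv.swap_apply_right]
      exact if_congr (by omega) rfl rfl
    · rw [Equiv.swap_apply_of_ne_of_ne h1 h2]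

lemma vtx_zero {m N : ℕ} (z : Fin (m+1) → Fin N) (σ : Equiv.Perm (Fin (m+1)))
    (hint : (z (σ 0) : ℕ) + 1 < N) (j : Fin (m+2)) (hj : j ≠ Fin.last (m+1)) :
    vtx (fun i => (succAt z (σ 0) i : ℕ)) (σ * finRotate (m+1)) j
      = vtx (fun i => (z i : ℕ)) σ (finRotate (m+2) j) := by
  funext i
  have hjm : (j : ℕ) ≤ m := by
    have h1 := j.isLt
    have h2 : (j : ℕ) ≠ m + 1 := fun h => hj (Fin.ext (by rw [h, Fin.val_last]))
    omega
  have hjv : ((finRotate (m+2) j) : ℕ) = (j : ℕ) + 1 := by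
    rw [finRotate_succ_apply, Fin.val_add_one, if_neg hj]
  by_cases h0 : σ.symm i = 0
  · have hi : i = σ 0 := by rw [← Equiv.apply_symm_apply σ i, h0]
    have hs1 : (((σ * finRotate (m+1)).symm i) : ℕ) = m := by
      rw [mul_symm_apply, h0, finRotate_symm_val, if_pos rfl]
    have hs2 : ((σ.symm i) : ℕ) = 0 := by rw [h0]; rfl
    simp only [vtx]
    rw [hs1, hs2, hjv, if_neg (by omega), if_pos (by omega), hi, succAt_val _ _ hint]
  · have hi : i ≠ σ 0 := fun h => h0 (by rw [h, Equiv.symm_apply_apply])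
    have hp1 : 1 ≤ ((σ.symm i) : ℕ) := Nat.pos_of_ne_zero (fun h => h0 (Fin.ext h))
    have hs1 : (((σ * finRotate (m+1)).symm i) : ℕ) = ((σ.symm i) : ℕ) - 1 := by
      rw [mul_symm_apply, finRotate_symm_val, if_neg h0]
    simp only [vtx]
    rw [hs1, hjv, succAt_ne _ _ _ hi]
    congr 1
    exact if_congr (by omega) rfl rfl

lemma vtx_corr {m N : ℕ} (z : Fin (m+1) → Fin N) (σ : Equiv.Perm (Fin (m+1)))
    (hfix : σ (Fin.last m) = Fin.last m) (hz : (z (Fin.last m) : ℕ) = 0) (j' : Fin (m+1)) :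
    vtx (fun i => (z i : ℕ)) σ (Fin.castSucc j')
      = Fin.snoc (vtx (fun i => (z (Fin.castSucc i) : ℕ)) (restrLast σ) j') 0 := by
  funext i
  refine Fin.lastCases ?_ ?_ i
  · rw [Fin.snoc_last]
    simp only [vtx]
    rw [symm_fix σ hfix, Fin.val_last, Fin.coe_castSucc,
      if_neg (by have := j'.isLt; omega), hz]
  · intro i0
    rw [Fin.snoc_castSucc]
    simp only [vtx]
    rw [symm_castSucc σ hfix]
    simp [Fin.coe_castSucc]


open scoped Classical

section Step

variable {m N : ℕ}

def labP (ℓ : (Fin (m+1) → ℕ) → Fin (m+2))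
    (p : (Fin (m+1) → Fin N) × Equiv.Perm (Fin (m+1))) : Fin (m+2) → Fin (m+2) :=
  fun k => ℓ (vtx (fun i => (p.1 i : ℕ)) p.2 k)

def DoorT (ℓ : (Fin (m+1) → ℕ) → Fin (m+2))
    (t : ((Fin (m+1) → Fin N) × Equiv.Perm (Fin (m+1))) × Fin (m+2)) : Prop :=
  IsDoorFn (labP ℓ t.1) t.2

def BdryT (t : ((Fin (m+1) → Fin N) × Equiv.Perm (Fin (m+1))) × Fin (m+2)) : Prop :=
  (t.2 = Fin.last (m+1) ∧ (t.1.1 (t.1.2 (Fin.last m)) : ℕ) = 0)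
  ∨ (t.2 = 0 ∧ (t.1.1 (t.1.2 0) : ℕ) + 1 = N)

def pivotT (t : ((Fin (m+1) → Fin N) × Equiv.Perm (Fin (m+1))) × Fin (m+2)) :
    ((Fin (m+1) → Fin N) × Equiv.Perm (Fin (m+1))) × Fin (m+2) :=
  if t.2 = 0 then
    ((succAt t.1.1 (t.1.2 0), t.1.2 * finRotate (m+1)), Fin.last (m+1))
  else if t.2 = Fin.last (m+1) then
    ((predAt t.1.1 (t.1.2 (Fin.last m)), t.1.2 * (finRotate (m+1))⁻¹), 0)
  else
    ((t.1.1, t.1.2 * Equiv.swap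
        (Fin.mk ((t.2 : ℕ) - 1) (by have := t.2.isLt; omega))
        (Fin.mk (min (t.2 : ℕ) m) (by have := Nat.min_le_right (t.2 : ℕ) m; omega))), t.2)

lemma last_ne_zero' : (Fin.last (m+1) : Fin (m+2)) ≠ 0 := by
  intro h
  have := congrArg Fin.val h
  simp [Fin.val_last] at this

/-- the key pivot lemma: zero-case relationship -/
lemma pivot_zero_door (ℓ : (Fin (m+1) → ℕ) → Fin (m+2)) (z : Fin (m+1) → Fin N)
    (σ : Equiv.Perm (Fin (m+1))) (hint : (z (σ 0) : ℕ) + 1 < N) :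
    (DoorT ℓ (((succAt z (σ 0), σ * finRotate (m+1)), Fin.last (m+1)))
      ↔ DoorT ℓ ((z, σ), 0)) := by
  unfold DoorT
  have h := door_reindex (labP ℓ (z, σ)) (labP ℓ (succAt z (σ 0), σ * finRotate (m+1)))
      (finRotate (m+2)) (Fin.last (m+1)) ?_
  · rw [h, finRotate_last]
  · intro j hj
    unfold labP
    exact congrArg ℓ (vtx_zero z σ hint j hj)

lemma rot_inv_zero : ((finRotate (m+1))⁻¹ : Equiv.Perm (Fin (m+1))) 0 = Fin.last m := by
  rw [Equiv.Perm.inv_eq_iff_eq, finRotate_last]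

lemma pivot_main (ℓ : (Fin (m+1) → ℕ) → Fin (m+2))
    (t : ((Fin (m+1) → Fin N) × Equiv.Perm (Fin (m+1))) × Fin (m+2))
    (hd : DoorT ℓ t) (hb : ¬ BdryT t) :
    DoorT ℓ (pivotT t) ∧ ¬ BdryT (pivotT t) ∧ pivotT (pivotT t) = t ∧ pivotT t ≠ t := by
  obtain ⟨⟨z, σ⟩, k⟩ := t
  by_cases hk0 : k = 0
  · subst hk0
    -- interior condition
    have hint : (z (σ 0) : ℕ) + 1 < N := by
      have h1 := (z (σ 0)).isLt
      have h2 : ¬ ((z (σ 0) : ℕ) + 1 = N) := fun h => hb (Or.inr ⟨rfl, h⟩)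
      omega
    have hpiv : pivotT ((z, σ), (0 : Fin (m+2)))
        = ((succAt z (σ 0), σ * finRotate (m+1)), Fin.last (m+1)) := by
      unfold pivotT; rw [if_pos rfl]
    rw [hpiv]
    have hσ' : (σ * finRotate (m+1)) (Fin.last m) = σ 0 := by
      rw [Equiv.Perm.mul_apply, finRotate_last]
    refine ⟨(pivot_zero_door ℓ z σ hint).2 hd, ?_, ?_, ?_⟩
    · rintro (⟨-, h2⟩ | ⟨h1, -⟩)
      · rw [hσ'] at h2
        rw [succAt_val _ _ hint] at h2
        omega
      · exact last_ne_zero' h1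
    · unfold pivotT
      rw [if_neg last_ne_zero', if_pos rfl]
      have e1 : (succAt z (σ 0)) ((σ * finRotate (m+1)) (Fin.last m)) = succAt z (σ 0) (σ 0) := by
        rw [hσ']
      refine Prod.ext (Prod.ext ?_ ?_) ?_
      · simp only [hσ']
        exact predAt_succAt z (σ 0) hint
      · simp only
        rw [mul_assoc, mul_inv_cancel, mul_one]
      · simp only
    · intro h
      exact last_ne_zero' (congrArg Prod.snd h)
  · by_cases hkl : k = Fin.last (m+1)
    · subst hkl
      have hz1 : 1 ≤ (z (σ (Fin.last m)) : ℕ) := by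
        have h2 : ¬ ((z (σ (Fin.last m)) : ℕ) = 0) := fun h => hb (Or.inl ⟨rfl, h⟩)
        omega
      have hpiv : pivotT ((z, σ), Fin.last (m+1))
          = ((predAt z (σ (Fin.last m)), σ * (finRotate (m+1))⁻¹), 0) := by
        unfold pivotT; rw [if_neg last_ne_zero', if_pos rfl]
      set z'' := predAt z (σ (Fin.last m)) with hz''
      set σ'' := σ * (finRotate (m+1))⁻¹ with hσ''
      have hs0 : σ'' 0 = σ (Fin.last m) := by
        rw [hσ'', Equiv.Perm.mul_apply, rot_inv_zero]
      have hint'' : (z'' (σ'' 0) : ℕ) + 1 < N := by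
        rw [hs0, hz'', predAt_val]
        have := (z (σ (Fin.last m))).isLt
        omega
      have hback : ((succAt z'' (σ'' 0), σ'' * finRotate (m+1)), Fin.last (m+1))
          = ((z, σ), Fin.last (m+1)) := by
        refine Prod.ext (Prod.ext ?_ ?_) rfl
        · simp only [hs0, hz'']
          exact succAt_predAt z (σ (Fin.last m)) hz1
        · simp only [hσ'']
          rw [inv_mul_cancel_right]
      have hdoor'' : DoorT ℓ ((z'', σ''), (0 : Fin (m+2))) := by
        have := (pivot_zero_door ℓ z'' σ'' hint'')
        rw [hback] at this
        exact this.1 hd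
      rw [hpiv]
      refine ⟨hdoor'', ?_, ?_, ?_⟩
      · rintro (⟨h1, -⟩ | ⟨-, h2⟩)
        · exact last_ne_zero' h1.symm
        · rw [hs0, hz'', predAt_val] at h2
          have := (z (σ (Fin.last m))).isLt
          omega
      · show pivotT ((z'', σ''), (0 : Fin (m+2))) = _
        unfold pivotT
        rw [if_pos rfl]
        exact hback
      · intro h
        exact last_ne_zero' (congrArg Prod.snd h).symm
    · -- middle case
      have hk1 : 1 ≤ (k : ℕ) := by
        rcases Nat.eq_zero_or_pos (k : ℕ) with h | h
        · exact absurd (Fin.ext h) hk0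
        · exact h
      have hkm : (k : ℕ) ≤ m := by
        have h1 := k.isLt
        have h2 : (k : ℕ) ≠ m + 1 := fun h => hkl (Fin.ext (by rw [h, Fin.val_last]))
        omega
      set a : Fin (m+1) := Fin.mk ((k : ℕ) - 1) (by have := k.isLt; omega) with ha
      set b : Fin (m+1) := Fin.mk (min (k : ℕ) m) (by have := Nat.min_le_right (k : ℕ) m; omega) with hb
      have hbv : (b : ℕ) = (k : ℕ) := by rw [hb]; simp [Nat.min_eq_left hkm]
      have hav : (a : ℕ) + 1 = (k : ℕ) := by rw [ha]; simp; omega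
      have hpiv : pivotT ((z, σ), k) = ((z, σ * Equiv.swap a b), k) := by
        unfold pivotT; rw [if_neg hk0, if_neg hkl]
      have hvtx : ∀ j, j ≠ k → labP ℓ (z, σ * Equiv.swap a b) j = labP ℓ (z, σ) j := by
        intro j hj
        unfold labP
        exact congrArg ℓ (vtx_mid z σ a b k hav hbv j hj)
      rw [hpiv]
      refine ⟨?_, ?_, ?_, ?_⟩
      · exact (door_congr _ _ k hvtx).2 hd
      · rintro (⟨h1, -⟩ | ⟨h1, -⟩)
        · exact hkl h1
        · exact hk0 h1
      · unfold pivotT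
        rw [if_neg hk0, if_neg hkl]
        refine Prod.ext (Prod.ext rfl ?_) rfl
        simp only
        rw [mul_assoc, Equiv.swap_mul_self, mul_one]
      · intro h
        have h2 : σ * Equiv.swap a b = σ := congrArg (fun t => t.1.2) h
        have h3 : (σ * Equiv.swap a b) a = σ a := by rw [h2]
        rw [Equiv.Perm.mul_apply, Equiv.swap_apply_left] at h3
        have h4 : b = a := σ.injective h3
        have h5 := congrArg Fin.val h4
        omega

lemma no_bdry_zero_door (ℓ : (Fin (m+1) → ℕ) → Fin (m+2))
    (hβ : ∀ x : Fin (m+1) → ℕ, (∀ i, x i ≤ N) → (∃ i, x i = N) → ℓ x ≠ 0)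
    (z : Fin (m+1) → Fin N) (σ : Equiv.Perm (Fin (m+1)))
    (hzb : (z (σ 0) : ℕ) + 1 = N) : ¬ DoorT ℓ ((z, σ), (0 : Fin (m+2))) := by
  intro hd
  have h0l : (0 : Fin (m+2)) ≠ Fin.last (m+1) := Ne.symm last_ne_zero'
  obtain ⟨j, hj0, hjc⟩ := hd.2 0 h0l
  have hj1 : 1 ≤ (j : ℕ) := Nat.pos_of_ne_zero (fun h => hj0 (Fin.ext h))
  have hcoord : vtx (fun i => (z i : ℕ)) σ j (σ 0) = N := by
    simp only [vtx]
    rw [Equiv.symm_apply_apply]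
    rw [if_pos (by rw [Fin.val_zero]; omega)]
    omega
  exact hβ _ (fun i => vtx_le z σ j i) ⟨σ 0, hcoord⟩ hjc

lemma bdry_last_fix (ℓ : (Fin (m+1) → ℕ) → Fin (m+2))
    (hα : ∀ x : Fin (m+1) → ℕ, (∀ i, x i ≤ N) → ∀ i : Fin (m+1), x i = 0 → ℓ x ≠ i.succ)
    (z : Fin (m+1) → Fin N) (σ : Equiv.Perm (Fin (m+1)))
    (hz0 : (z (σ (Fin.last m)) : ℕ) = 0)
    (hd : DoorT ℓ ((z, σ), Fin.last (m+1))) : σ (Fin.last m) = Fin.last m := by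
  by_contra hne
  have hsuccne : ((σ (Fin.last m)).succ : Fin (m+2)) ≠ Fin.last (m+1) := by
    intro h
    have hv := congrArg Fin.val h
    rw [Fin.val_succ, Fin.val_last] at hv
    exact hne (Fin.ext (by have := (σ (Fin.last m)).isLt; rw [Fin.val_last]; omega))
  obtain ⟨j, hjl, hjc⟩ := hd.2 (σ (Fin.last m)).succ hsuccne
  have hjm : (j : ℕ) ≤ m := by
    have h1 := j.isLt
    have h2 : (j : ℕ) ≠ m + 1 := fun h => hjl (Fin.ext (by rw [h, Fin.val_last]))
    omega
  have hcoord : vtx (fun i => (z i : ℕ)) σ j (σ (Fin.last m)) = 0 := by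
    simp only [vtx]
    rw [Equiv.symm_apply_apply]
    rw [if_neg (by rw [Fin.val_last]; omega)]
    omega
  exact hα _ (fun i => vtx_le z σ j i) (σ (Fin.last m)) hcoord hjc

lemma door_iff_surj (ℓ : (Fin (m+1) → ℕ) → Fin (m+2)) (ℓ' : (Fin m → ℕ) → Fin (m+1))
    (hcorr : ∀ y : Fin m → ℕ, (∀ i, y i ≤ N) → Fin.castSucc (ℓ' y) = ℓ (Fin.snoc y 0))
    (z : Fin (m+1) → Fin N) (σ : Equiv.Perm (Fin (m+1)))
    (hfix : σ (Fin.last m) = Fin.last m) (hz : (z (Fin.last m) : ℕ) = 0) :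
    DoorT ℓ ((z, σ), Fin.last (m+1)) ↔
      Function.Surjective
        (fun k : Fin (m+1) => ℓ' (vtx (fun i => (z (Fin.castSucc i) : ℕ)) (restrLast σ) k)) := by
  have hlab : ∀ j' : Fin (m+1),
      labP ℓ (z, σ) (Fin.castSucc j') =
        Fin.castSucc (ℓ' (vtx (fun i => (z (Fin.castSucc i) : ℕ)) (restrLast σ) j')) := by
    intro j'
    show ℓ _ = _
    rw [vtx_corr z σ hfix hz j']
    rw [← hcorr _ (fun i => vtx_le (fun i => z (Fin.castSucc i)) (restrLast σ) j' i)]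
  constructor
  · intro hd c'
    have hc : (Fin.castSucc c' : Fin (m+2)) ≠ Fin.last (m+1) := (Fin.castSucc_lt_last c').ne
    obtain ⟨j, hjl, hjc⟩ := hd.2 (Fin.castSucc c') hc
    obtain ⟨j', rfl⟩ := Fin.exists_castSucc_eq.2 hjl
    refine ⟨j', ?_⟩
    have := hlab j'
    rw [hjc] at this
    exact (Fin.castSucc_injective _ this.symm)
  · intro hs
    constructor
    · intro j hjl
      obtain ⟨j', rfl⟩ := Fin.exists_castSucc_eq.2 hjl
      rw [show labP ℓ (z, σ) (Fin.castSucc j') = _ from hlab j']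
      exact (Fin.castSucc_lt_last _).ne
    · intro c hc
      obtain ⟨c', rfl⟩ := Fin.exists_castSucc_eq.2 hc
      obtain ⟨j', hj'⟩ := hs c'
      refine ⟨Fin.castSucc j', (Fin.castSucc_lt_last _).ne, ?_⟩
      rw [hlab j']
      simp only at hj'
      rw [hj']

end Step


lemma door_local {d : ℕ} (L : Fin (d+1) → Fin (d+1)) :
    ∑ k : Fin (d+1), (if IsDoorFn L k then (1 : ZMod 2) else 0)
      = (if Function.Surjective L then 1 else 0) := by
  by_cases hs : Function.Surjective L
  · have hinj : Function.Injective L := Finite.injective_iff_surjective.2 hs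
    obtain ⟨k0, hk0⟩ := hs (Fin.last d)
    have hiff : ∀ k, IsDoorFn L k ↔ k = k0 := by
      intro k
      constructor
      · intro hdk
        by_contra hne
        exact hdk.1 k0 (fun h => hne h.symm) hk0
      · rintro rfl
        refine ⟨fun j hj hlast => hj (hinj (hlast.trans hk0.symm)), fun c hc => ?_⟩
        obtain ⟨j, hj⟩ := hs c
        exact ⟨j, fun h => hc (by rw [← hj, h, hk0]), hj⟩
    rw [if_pos hs]
    calc ∑ k : Fin (d+1), (if IsDoorFn L k then (1 : ZMod 2) else 0)
        = ∑ k : Fin (d+1), (if k = k0 then (1 : ZMod 2) else 0) := by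
          refine Finset.sum_congr rfl fun k _ => ?_
          exact if_congr (hiff k) rfl rfl
      _ = 1 := by simp
  · rw [if_neg hs]
    simp only [Function.Surjective, not_forall] at hs
    obtain ⟨c0, hc0⟩ := hs
    push_neg at hc0
    simp only [ne_eq] at hc0
    by_cases hc0l : c0 = Fin.last d
    · subst hc0l
      by_cases hall : ∀ c, c ≠ Fin.last d → ∃ j, L j = c
      · -- all non-last values hit, last missed: exactly one duplicate pair
        have hni : ¬ Function.Injective L := by
          intro hinj
          obtain ⟨j, hj⟩ := Finite.injective_iff_surjective.1 hinj (Fin.last d)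
          exact hc0 j hj
        obtain ⟨j1, j2, heq, hne⟩ := Function.not_injective_iff.1 hni
        have hdoor : ∀ k, IsDoorFn L k ↔ (k = j1 ∨ k = j2) := by
          intro k
          constructor
          · intro hdk
            by_contra hk
            push_neg at hk
            have hd0 : d ≠ 0 := by
              rintro rfl
              apply hne
              have h1 := j1.isLt
              have h2 := j2.isLt
              ext
              omega
            have hsurj : Set.SurjOn L (↑((Finset.univ.erase k).erase j2))
                (↑(Finset.univ.filter (fun c => c ≠ Fin.last d))) := by
              intro c hc
              simp only [Finset.coe_filter, Set.mem_setOf_eq] at hc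
              obtain ⟨j, hjk, hjc⟩ := hdk.2 c hc.2
              by_cases hj2 : j = j2
              · subst hj2
                refine ⟨j1, by simp [hne, Ne.symm hk.1], heq.trans hjc⟩
              · exact ⟨j, by simp [hj2, hjk], hjc⟩
            have h1 : (Finset.univ.filter (fun c => c ≠ Fin.last d)).card = d := by
              rw [Finset.filter_ne', Finset.card_erase_of_mem (Finset.mem_univ _)]
              simp
            have h2 : ((Finset.univ.erase k).erase j2).card = d - 1 := by
              rw [Finset.card_erase_of_mem, Finset.card_erase_of_mem (Finset.mem_univ _)]
              · simp
              · exact Finset.mem_erase.2 ⟨hk.2.symm, Finset.mem_univ _⟩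
            have := Finset.card_le_card_of_surjOn L hsurj
            rw [h1, h2] at this
            omega
          · have main : ∀ a b : Fin (d+1), a ≠ b → L a = L b → IsDoorFn L a := by
              intro a b hab hLab
              refine ⟨fun j _ => hc0 j, fun c hc => ?_⟩
              obtain ⟨j, hj⟩ := hall c hc
              by_cases hja : j = a
              · subst hja
                exact ⟨b, Ne.symm hab, hLab ▸ hj⟩
              · exact ⟨j, hja, hj⟩
            rintro (rfl | rfl)
            · exact main k j2 hne heq
            · exact main k j1 (Ne.symm hne) heq.symm
        calc ∑ k : Fin (d+1), (if IsDoorFn L k then (1 : ZMod 2) else 0)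
            = ∑ k : Fin (d+1), (if k ∈ ({j1, j2} : Finset (Fin (d+1))) then (1 : ZMod 2) else 0) := by
              refine Finset.sum_congr rfl fun k _ => if_congr (by simpa using hdoor k) rfl rfl
          _ = ({j1, j2} : Finset (Fin (d+1))).card • (1 : ZMod 2) := by
              rw [Finset.sum_ite_mem, Finset.univ_inter, Finset.sum_const]
          _ = 0 := by
              rw [Finset.card_pair hne, two_smul]
              decide
      · push_neg at hall
        obtain ⟨c1, hc1l, hc1⟩ := hall
        have : ∀ k, ¬ IsDoorFn L k := by
          intro k hdk
          obtain ⟨j, _, hj⟩ := hdk.2 c1 hc1l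
          exact hc1 j hj
        simp [this]
    · have : ∀ k, ¬ IsDoorFn L k := by
        intro k hdk
        obtain ⟨j, _, hj⟩ := hdk.2 c0 hc0l
        exact hc0 j hj
      simp [this]


lemma sum_indicator_eq_card {α : Type*} [Fintype α] (P : α → Prop) :
    (∑ a : α, if P a then (1 : ZMod 2) else 0)
      = ((Finset.univ.filter P).card : ZMod 2) := by
  rw [← Finset.sum_filter, Finset.sum_const, nsmul_eq_mul, mul_one]

theorem rainbow_sum : ∀ (d N : ℕ), 0 < N → ∀ (ℓ : (Fin d → ℕ) → Fin (d+1)),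
    (∀ x : Fin d → ℕ, (∀ i, x i ≤ N) → ∀ i : Fin d, x i = 0 → ℓ x ≠ i.succ) →
    (∀ x : Fin d → ℕ, (∀ i, x i ≤ N) → (∃ i, x i = N) → ℓ x ≠ 0) →
    (∑ p : (Fin d → Fin N) × Equiv.Perm (Fin d),
      if Function.Surjective (fun k => ℓ (vtx (fun i => (p.1 i : ℕ)) p.2 k)) then (1 : ZMod 2) else 0) = 1 := by
  intro d
  induction d with
  | zero =>
    intro N hN ℓ hα hβ
    have hs : ∀ p : (Fin 0 → Fin N) × Equiv.Perm (Fin 0),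
        Function.Surjective (fun k : Fin 1 => ℓ (vtx (fun i => (p.1 i : ℕ)) p.2 k)) := by
      intro p c
      have hall : ∀ a b : Fin (0+1), a = b := fun a b => Fin.ext (by have := a.isLt; have := b.isLt; omega)
      exact ⟨0, hall _ _⟩
    calc (∑ p : (Fin 0 → Fin N) × Equiv.Perm (Fin 0),
          if Function.Surjective (fun k => ℓ (vtx (fun i => (p.1 i : ℕ)) p.2 k)) then (1 : ZMod 2) else 0)
        = ∑ _p : (Fin 0 → Fin N) × Equiv.Perm (Fin 0), (1 : ZMod 2) :=
          Finset.sum_congr rfl (fun p _ => if_pos (hs p))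
      _ = 1 := by
          rw [Finset.sum_const, Finset.card_univ]
          have hcard : Fintype.card ((Fin 0 → Fin N) × Equiv.Perm (Fin 0)) = 1 := by
            simp
          rw [hcard, one_smul]
  | succ m IH =>
    intro N hN ℓ hα hβ
    -- bounds for snoc
    have hsnb : ∀ y : Fin m → ℕ, (∀ i, y i ≤ N) → ∀ i2 : Fin (m+1), (Fin.snoc y 0 : Fin (m+1) → ℕ) i2 ≤ N := by
      intro y hy i2
      refine Fin.lastCases ?_ ?_ i2
      · rw [Fin.snoc_last]; omega
      · intro i0; rw [Fin.snoc_castSucc]; exact hy i0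
    have hlastlab : ∀ y : Fin m → ℕ, (∀ i, y i ≤ N) → ℓ (Fin.snoc y 0) ≠ Fin.last (m+1) := by
      intro y hy
      have h := hα (Fin.snoc y 0) (hsnb y hy) (Fin.last m) (Fin.snoc_last _ _)
      rwa [Fin.succ_last] at h
    set ℓ' : (Fin m → ℕ) → Fin (m+1) := fun y =>
      if h : ∀ i, y i ≤ N then (ℓ (Fin.snoc y 0)).castPred (hlastlab y h) else 0 with hℓ'
    have hcorr : ∀ y : Fin m → ℕ, (∀ i, y i ≤ N) → Fin.castSucc (ℓ' y) = ℓ (Fin.snoc y 0) := by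
      intro y hy
      rw [hℓ']
      simp only
      rw [dif_pos hy, Fin.castSucc_castPred]
    have hα' : ∀ y : Fin m → ℕ, (∀ i, y i ≤ N) → ∀ i : Fin m, y i = 0 → ℓ' y ≠ i.succ := by
      intro y hy i hyi heq
      have h2 : (Fin.snoc y 0 : Fin (m+1) → ℕ) (Fin.castSucc i) = 0 := by
        rw [Fin.snoc_castSucc]; exact hyi
      have h3 := hα (Fin.snoc y 0) (hsnb y hy) (Fin.castSucc i) h2
      apply h3
      rw [← hcorr y hy, heq, Fin.succ_castSucc]
    have hβ' : ∀ y : Fin m → ℕ, (∀ i, y i ≤ N) → (∃ i, y i = N) → ℓ' y ≠ 0 := by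
      rintro y hy ⟨i, hyi⟩ heq
      apply hβ (Fin.snoc y 0) (hsnb y hy) ⟨Fin.castSucc i, by rw [Fin.snoc_castSucc]; exact hyi⟩
      rw [← hcorr y hy, heq, Fin.castSucc_zero]
    -- step 1 : rainbow sum = door sum
    have hlocal : (∑ p : (Fin (m+1) → Fin N) × Equiv.Perm (Fin (m+1)),
          if Function.Surjective (labP ℓ p) then (1 : ZMod 2) else 0)
        = ∑ t : ((Fin (m+1) → Fin N) × Equiv.Perm (Fin (m+1))) × Fin (m+2),
            if DoorT ℓ t then (1 : ZMod 2) else 0 := by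
      conv_rhs => rw [Fintype.sum_prod_type]
      refine Finset.sum_congr rfl fun p _ => ?_
      exact (door_local (labP ℓ p)).symm
    -- step 2 : split doors into boundary and interior
    have hsplit : (∑ t : ((Fin (m+1) → Fin N) × Equiv.Perm (Fin (m+1))) × Fin (m+2),
          if DoorT ℓ t then (1 : ZMod 2) else 0)
        = (∑ t ∈ Finset.univ.filter
              (fun t : ((Fin (m+1) → Fin N) × Equiv.Perm (Fin (m+1))) × Fin (m+2) =>
                DoorT ℓ t ∧ BdryT t), (1 : ZMod 2))
          + ∑ t ∈ Finset.univ.filter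
              (fun t : ((Fin (m+1) → Fin N) × Equiv.Perm (Fin (m+1))) × Fin (m+2) =>
                DoorT ℓ t ∧ ¬ BdryT t), (1 : ZMod 2) := by
      rw [← Finset.sum_filter]
      rw [← Finset.sum_filter_add_sum_filter_not
        (Finset.univ.filter (fun t => DoorT ℓ t)) (fun t => BdryT t) (fun _ => (1 : ZMod 2))]
      rw [Finset.filter_filter, Finset.filter_filter]
    -- step 3 : interior doors cancel
    have hinv : (∑ t ∈ Finset.univ.filter
          (fun t : ((Fin (m+1) → Fin N) × Equiv.Perm (Fin (m+1))) × Fin (m+2) =>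
            DoorT ℓ t ∧ ¬ BdryT t), (1 : ZMod 2)) = 0 := by
      refine Finset.sum_involution (fun t _ => pivotT t) (fun t ht => by decide) ?_ ?_ ?_
      · intro t ht _
        have hmem := Finset.mem_filter.1 ht
        exact (pivot_main ℓ t hmem.2.1 hmem.2.2).2.2.2
      · intro t ht
        have hmem := Finset.mem_filter.1 ht
        have h := pivot_main ℓ t hmem.2.1 hmem.2.2
        exact Finset.mem_filter.2 ⟨Finset.mem_univ _, h.1, h.2.1⟩
      · intro t ht
        have hmem := Finset.mem_filter.1 ht
        exact (pivot_main ℓ t hmem.2.1 hmem.2.2).2.2.1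
    -- characterization of boundary doors
    have hchar : ∀ t ∈ Finset.univ.filter
          (fun t : ((Fin (m+1) → Fin N) × Equiv.Perm (Fin (m+1))) × Fin (m+2) =>
            DoorT ℓ t ∧ BdryT t),
          t.2 = Fin.last (m+1) ∧ t.1.2 (Fin.last m) = Fin.last m ∧ (t.1.1 (Fin.last m) : ℕ) = 0 := by
      rintro ⟨⟨z, σ⟩, k⟩ ht
      have hmem := Finset.mem_filter.1 ht
      rcases hmem.2.2 with ⟨hk, hz⟩ | ⟨hk, hz⟩
      · subst hk
        have hfix := bdry_last_fix ℓ hα z σ hz hmem.2.1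
        exact ⟨rfl, hfix, by rw [← hfix]; exact hz⟩
      · exfalso
        subst hk
        exact no_bdry_zero_door ℓ hβ z σ hz hmem.2.1
    -- step 4 : boundary doors biject with downstairs rainbow rooms
    have hcard : (Finset.univ.filter
          (fun t : ((Fin (m+1) → Fin N) × Equiv.Perm (Fin (m+1))) × Fin (m+2) =>
            DoorT ℓ t ∧ BdryT t)).card
        = (Finset.univ.filter
            (fun p : (Fin m → Fin N) × Equiv.Perm (Fin m) =>
              Function.Surjective
                (fun k => ℓ' (vtx (fun i => (p.1 i : ℕ)) p.2 k)))).card := by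
      refine Finset.card_bij'
        (fun t _ => ((fun i => t.1.1 (Fin.castSucc i)), restrLast t.1.2))
        (fun p' _ => ((Fin.snoc p'.1 ⟨0, hN⟩, extLast p'.2), Fin.last (m+1)))
        ?_ ?_ ?_ ?_
      · -- forward membership
        intro t ht
        obtain ⟨hk, hfix, hz⟩ := hchar t ht
        have hmem := Finset.mem_filter.1 ht
        have hd : DoorT ℓ ((t.1.1, t.1.2), Fin.last (m+1)) := by
          have := hmem.2.1
          rwa [show t = ((t.1.1, t.1.2), t.2) from rfl, hk] at this
        refine Finset.mem_filter.2 ⟨Finset.mem_univ _, ?_⟩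
        exact (door_iff_surj ℓ ℓ' hcorr t.1.1 t.1.2 hfix hz).1 hd
      · -- backward membership
        intro p' hp'
        have hp'2 := Finset.mem_filter.1 hp'
        refine Finset.mem_filter.2 ⟨Finset.mem_univ _, ?_, Or.inl ⟨rfl, ?_⟩⟩
        · -- Door
          have hfix : extLast p'.2 (Fin.last m) = Fin.last m := extLast_last _
          have hz : (((Fin.snoc p'.1 ⟨0, hN⟩ : Fin (m+1) → Fin N) (Fin.last m)) : ℕ) = 0 := by
            rw [Fin.snoc_last]
          apply (door_iff_surj ℓ ℓ' hcorr _ _ hfix hz).2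
          have heq1 : (fun i => (((Fin.snoc p'.1 ⟨0, hN⟩ : Fin (m+1) → Fin N) (Fin.castSucc i)) : ℕ))
              = fun i => ((p'.1 i : Fin N) : ℕ) := by
            funext i
            rw [Fin.snoc_castSucc]
          rw [heq1, restrLast_extLast]
          exact hp'2.2
        · -- boundary
          simp [extLast_last, Fin.snoc_last]
      · -- left inverse
        intro t ht
        obtain ⟨hk, hfix, hz⟩ := hchar t ht
        refine Prod.ext (Prod.ext ?_ ?_) ?_
        · show Fin.snoc (fun i => t.1.1 (Fin.castSucc i)) (⟨0, hN⟩ : Fin N) = t.1.1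
          funext i
          refine Fin.lastCases ?_ ?_ i
          · rw [Fin.snoc_last]
            exact Fin.ext (by rw [hz])
          · intro i0
            rw [Fin.snoc_castSucc]
        · show extLast (restrLast t.1.2) = t.1.2
          exact extLast_restrLast t.1.2 hfix
        · exact hk.symm
      · -- right inverse
        intro p' hp'
        refine Prod.ext ?_ ?_
        · show (fun i => (Fin.snoc p'.1 ⟨0, hN⟩ : Fin (m+1) → Fin N) (Fin.castSucc i)) = p'.1
          funext i
          rw [Fin.snoc_castSucc]
        · show restrLast (extLast p'.2) = p'.2
          exact restrLast_extLast p'.2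
    -- assemble
    have hdown := IH N hN ℓ' hα' hβ'
    show (∑ p : (Fin (m+1) → Fin N) × Equiv.Perm (Fin (m+1)),
          if Function.Surjective (labP ℓ p) then (1 : ZMod 2) else 0) = 1
    rw [hlocal, hsplit, hinv, add_zero, Finset.sum_const, nsmul_eq_mul, mul_one, hcard]
    rw [← mul_one ((((Finset.univ.filter _).card : ℕ)) : ZMod 2), ← nsmul_eq_mul,
      ← Finset.sum_const, Finset.sum_filter]
    exact hdown


lemma coord_le_dist (n : ℕ) (x y : Fin n → ℤ) (i : Fin n) :
    |(x i : ℝ) - (y i : ℝ)| ≤ eucDistZ n x y := by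
  unfold eucDistZ
  rw [← Real.sqrt_sq_eq_abs]
  apply Real.sqrt_le_sqrt
  exact Finset.single_le_sum (f := fun i => ((x i : ℝ) - (y i : ℝ)) ^ 2)
    (fun i _ => sq_nonneg _) (Finset.mem_univ i)

lemma dist_le_of_coord (n : ℕ) (x y : Fin n → ℤ) (C : ℝ) (hC : 0 ≤ C)
    (h : ∀ i, |(x i : ℝ) - (y i : ℝ)| ≤ C) : eucDistZ n x y ≤ (n : ℝ) * C := by
  unfold eucDistZ
  have h1 : (∑ i, ((x i : ℝ) - (y i : ℝ)) ^ 2) ≤ (n : ℝ) * C ^ 2 := by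
    calc (∑ i, ((x i : ℝ) - (y i : ℝ)) ^ 2) ≤ ∑ _i : Fin n, C ^ 2 := by
          refine Finset.sum_le_sum fun i _ => ?_
          rw [← sq_abs]
          exact pow_le_pow_left₀ (abs_nonneg _) (h i) 2
      _ = (n : ℝ) * C ^ 2 := by
          rw [Finset.sum_const, Finset.card_univ, Fintype.card_fin, nsmul_eq_mul]
  calc Real.sqrt (∑ i, ((x i : ℝ) - (y i : ℝ)) ^ 2) ≤ Real.sqrt ((n : ℝ) * C ^ 2) :=
        Real.sqrt_le_sqrt h1
    _ ≤ Real.sqrt (((n : ℝ) * C) ^ 2) := by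
        apply Real.sqrt_le_sqrt
        have hn2 : (n : ℝ) ≤ (n : ℝ) ^ 2 := by
          rcases Nat.eq_zero_or_pos n with h | h
          · simp [h]
          · have h1 : (1:ℝ) ≤ (n:ℝ) := by exact_mod_cast h
            nlinarith
        nlinarith [sq_nonneg C]
    _ = (n : ℝ) * C := Real.sqrt_sq (by positivity)

lemma int_ediv_eq (L z w a : ℤ) (ha : a = L * z + w) (h0 : 0 ≤ w) (hL : w < L) :
    a / L = z := by
  have hLpos : 0 < L := lt_of_le_of_lt h0 hL
  rw [ha, add_comm, Int.add_mul_ediv_left w z hLpos.ne', Int.ediv_eq_zero_of_lt h0 hL, zero_add]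


lemma wall_unique (t s L E q q' : ℤ) (ht : 1 ≤ t) (hs : s = 2*t+1)
    (hE1 : s ≤ E) (hE2 : E + s ≤ L) (hq0 : 0 ≤ q) (hqL : q < L)
    (hq'0 : 0 ≤ q') (hq'L : q' < L) (hdvd : L ∣ (q - q' - E)) :
    (t ≤ q ∧ q ≤ L - t) ∨ (t ≤ q' ∧ q' ≤ L - t) := by
  by_contra hcon
  push_neg at hcon
  obtain ⟨K, hK⟩ := hdvd
  have hL0 : 0 < L := by omega
  have hK' : K = 0 ∨ K = -1 := by
    rcases le_or_gt 1 K with h | h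
    · exfalso
      have h2 : L * 1 ≤ L * K := mul_le_mul_of_nonneg_left h hL0.le
      omega
    · rcases le_or_gt K (-2) with h2 | h2
      · exfalso
        have h3 : L * K ≤ L * (-2) := mul_le_mul_of_nonneg_left h2 hL0.le
        omega
      · omega
  rcases hK' with rfl | rfl <;> omega

theorem asdim_upper (n : ℕ) (hn : 1 ≤ n) : AsdimLE (eucDistZ n) n := by
  intro r hr
  set t : ℕ := ⌈r⌉₊ + 1 with htdef
  have hrt : r < (t : ℝ) := by
    calc r ≤ (⌈r⌉₊ : ℝ) := Nat.le_ceil r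
      _ < (t : ℝ) := by
          rw [htdef]
          exact_mod_cast Nat.lt_succ_self _
  have ht1 : 1 ≤ t := by omega
  set s : ℕ := 2*t+1 with hsdef
  set L : ℕ := (n+1)*s with hLdef
  have hnsL : ((n:ℤ)) * (s:ℤ) + (s:ℤ) = (L:ℤ) := by
    rw [hLdef]; push_cast; ring
  have hsz : (s:ℤ) = 2*(t:ℤ)+1 := by rw [hsdef]; push_cast; ring
  have htz : 1 ≤ (t:ℤ) := by exact_mod_cast ht1
  have hL0 : (0:ℤ) < (L:ℤ) := by
    have hnn : (0:ℤ) ≤ (n:ℤ) := Int.natCast_nonneg n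
    nlinarith
  set D : Fin (n+1) → (Fin n → ℤ) → Set (Fin n → ℤ) := fun j z =>
    {x | ∀ i, (L:ℤ) * z i + ((j:ℕ):ℤ)*(s:ℤ) + (t:ℤ) ≤ x i
        ∧ x i ≤ (L:ℤ) * z i + ((j:ℕ):ℤ)*(s:ℤ) + ((L:ℤ) - (t:ℤ))} with hDdef
  have hDmem : ∀ (j : Fin (n+1)) (z : Fin n → ℤ) (x : Fin n → ℤ),
      x ∈ D j z ↔ ∀ i, (L:ℤ) * z i + ((j:ℕ):ℤ)*(s:ℤ) + (t:ℤ) ≤ x i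
        ∧ x i ≤ (L:ℤ) * z i + ((j:ℕ):ℤ)*(s:ℤ) + ((L:ℤ) - (t:ℤ)) := by
    intro j z x
    rw [hDdef]
    exact Iff.rfl
  -- coverage
  have hcov : ∀ x : Fin n → ℤ, ∃ (j : Fin (n+1)) (z : Fin n → ℤ), x ∈ D j z := by
    intro x
    by_contra hc
    push_neg at hc
    have hbad : ∀ j : Fin (n+1), ∃ i : Fin n,
        ¬ ((t:ℤ) ≤ (x i - ((j:ℕ):ℤ)*(s:ℤ)) % (L:ℤ)
            ∧ (x i - ((j:ℕ):ℤ)*(s:ℤ)) % (L:ℤ) ≤ (L:ℤ) - (t:ℤ)) := by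
      intro j
      by_contra hall
      push_neg at hall
      apply hc j (fun i => (x i - ((j:ℕ):ℤ)*(s:ℤ)) / (L:ℤ))
      rw [hDmem]
      intro i
      have hgood : (t:ℤ) ≤ (x i - ((j:ℕ):ℤ)*(s:ℤ)) % (L:ℤ)
          ∧ (x i - ((j:ℕ):ℤ)*(s:ℤ)) % (L:ℤ) ≤ (L:ℤ) - (t:ℤ) := by
        rcases hall i with ⟨h1, h2⟩
        exact ⟨h1, h2⟩
      have hdm := Int.mul_ediv_add_emod (x i - ((j:ℕ):ℤ)*(s:ℤ)) (L:ℤ)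
      constructor <;> omega
    choose f hf using hbad
    obtain ⟨j, j', hjj', hfeq⟩ := Fintype.exists_ne_map_eq_of_card_lt f (by simp)
    have key : ∀ (a b : Fin (n+1)), (a:ℕ) < (b:ℕ) → f a = f b → False := by
      intro a b hab hfab
      have ha := hf a
      have hb := hf b
      rw [hfab] at ha
      set x0 := x (f b) with hx0
      set qa := (x0 - ((a:ℕ):ℤ)*(s:ℤ)) % (L:ℤ) with hqa
      set qb := (x0 - ((b:ℕ):ℤ)*(s:ℤ)) % (L:ℤ) with hqb
      set E := (((b:ℕ):ℤ) - ((a:ℕ):ℤ))*(s:ℤ) with hE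
      have hdvd : (L:ℤ) ∣ (qa - qb - E) := by
        refine ⟨(x0 - ((b:ℕ):ℤ)*(s:ℤ))/(L:ℤ) - (x0 - ((a:ℕ):ℤ)*(s:ℤ))/(L:ℤ), ?_⟩
        rw [hqa, hqb, hE, Int.emod_def, Int.emod_def]
        ring
      have habz : ((a:ℕ):ℤ) + 1 ≤ ((b:ℕ):ℤ) := by exact_mod_cast hab
      have hbn : ((b:ℕ):ℤ) ≤ (n:ℤ) := by
        have := b.isLt
        exact_mod_cast Nat.lt_succ_iff.1 this
      have hs0 : (0:ℤ) ≤ (s:ℤ) := by omega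
      have hE1 : (s:ℤ) ≤ E := by
        rw [hE]
        nlinarith
      have hE2 : E + (s:ℤ) ≤ (L:ℤ) := by
        have h1 : E ≤ (n:ℤ) * (s:ℤ) := by
          rw [hE]
          apply mul_le_mul_of_nonneg_right _ hs0
          omega
        omega
      have hq0 : 0 ≤ qa := Int.emod_nonneg _ hL0.ne'
      have hqL : qa < (L:ℤ) := Int.emod_lt_of_pos _ hL0
      have hq'0 : 0 ≤ qb := Int.emod_nonneg _ hL0.ne'
      have hq'L : qb < (L:ℤ) := Int.emod_lt_of_pos _ hL0
      rcases wall_unique (t:ℤ) (s:ℤ) (L:ℤ) E qa qb htz hsz hE1 hE2 hq0 hqL hq'0 hq'L hdvd with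
        hgood | hgood
      · exact ha hgood
      · exact hb hgood
    rcases lt_trichotomy (j:ℕ) (j':ℕ) with h | h | h
    · exact key j j' h hfeq
    · exact hjj' (Fin.ext h)
    · exact key j' j h hfeq.symm
  -- the cover
  refine ⟨{U | ∃ (j : Fin (n+1)) (z : Fin n → ℤ), U = D j z}, ?_, ?_, ?_⟩
  · intro x
    obtain ⟨j, z, hx⟩ := hcov x
    exact ⟨D j z, ⟨j, z, rfl⟩, hx⟩
  · -- uniformly bounded
    refine ⟨(n:ℝ) * (L:ℝ), ?_⟩
    rintro U ⟨j, z, rfl⟩ x hx y hy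
    apply dist_le_of_coord n x y (L:ℝ) (by positivity)
    intro i
    have hxi := (hDmem j z x).1 hx i
    have hyi := (hDmem j z y).1 hy i
    have hint : |x i - y i| ≤ (L:ℤ) := by
      rw [abs_le]
      omega
    calc |(x i : ℝ) - (y i : ℝ)| = |((x i - y i : ℤ) : ℝ)| := by push_cast; ring_nf
      _ ≤ (L:ℝ) := by exact_mod_cast hint
  · -- multiplicity
    intro x
    set g : Fin (n+1) → Set (Fin n → ℤ) :=
      fun j => D j (fun i => (x i - ((j:ℕ):ℤ)*(s:ℤ) - 1) / (L:ℤ)) with hg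
    have hsub : {U | U ∈ {U | ∃ (j : Fin (n+1)) (z : Fin n → ℤ), U = D j z}
          ∧ ∃ y ∈ U, eucDistZ n x y ≤ r} ⊆ g '' Set.univ := by
      rintro U ⟨⟨j, z, rfl⟩, y, hyU, hyd⟩
      refine ⟨j, Set.mem_univ _, ?_⟩
      suffices hz : (fun i => (x i - ((j:ℕ):ℤ)*(s:ℤ) - 1) / (L:ℤ)) = z by
        show D j (fun i => (x i - ((j:ℕ):ℤ)*(s:ℤ) - 1) / (L:ℤ)) = D j z
        rw [hz]
      funext i
      have hyi := (hDmem j z y).1 hyU i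
      have hdiff : |x i - y i| < (t:ℤ) := by
        have h1 : |(x i : ℝ) - (y i : ℝ)| ≤ r := le_trans (coord_le_dist n x y i) hyd
        have h2 : |((x i - y i : ℤ) : ℝ)| < ((t:ℤ) : ℝ) := by
          have heq : |((x i - y i : ℤ) : ℝ)| = |(x i : ℝ) - (y i : ℝ)| := by
            push_cast
            ring_nf
          have hct : (((t:ℤ)) : ℝ) = ((t:ℕ) : ℝ) := by push_cast; rfl
          rw [heq, hct]
          exact lt_of_le_of_lt h1 hrt
        exact_mod_cast h2
      rw [abs_lt] at hdiff
      apply int_ediv_eq (L:ℤ) (z i) (x i - ((j:ℕ):ℤ)*(s:ℤ) - 1 - (L:ℤ) * z i)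
      · ring
      · omega
      · omega
    have hfin : (g '' Set.univ).Finite := Set.Finite.image g Set.finite_univ
    constructor
    · exact Set.Finite.subset hfin hsub
    · calc ({U | U ∈ {U | ∃ (j : Fin (n+1)) (z : Fin n → ℤ), U = D j z}
            ∧ ∃ y ∈ U, eucDistZ n x y ≤ r}).ncard
          ≤ (g '' Set.univ).ncard := Set.ncard_le_ncard hsub hfin
        _ ≤ (Set.univ : Set (Fin (n+1))).ncard := Set.ncard_image_le Set.finite_univ
        _ = n + 1 := by rw [Set.ncard_univ, Nat.card_eq_fintype_card, Fintype.card_fin]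


theorem asdim_lower (n : ℕ) (hn : 1 ≤ n) : ¬ AsdimLE (eucDistZ n) (n-1) := by
  intro H
  have hn0 : (0:ℝ) < (n:ℝ) := by exact_mod_cast hn
  obtain ⟨𝒰, hcov, ⟨B, hB⟩, hmult⟩ := H (n : ℝ) hn0
  set N : ℕ := ⌈B⌉₊ + 1 with hNdef
  have hN : 0 < N := Nat.succ_pos _
  have hBN : B < (N:ℝ) := by
    calc B ≤ (⌈B⌉₊ : ℝ) := Nat.le_ceil B
      _ < (N : ℝ) := by rw [hNdef]; exact_mod_cast Nat.lt_succ_self _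
  choose Uof hUof hmem using hcov
  set gl : Set (Fin n → ℤ) → Fin (n+1) := fun V =>
    if h : ∃ i : Fin n, ∃ u ∈ V, (N:ℤ) ≤ u i then Fin.succ h.choose else 0 with hgl
  set ι : (Fin n → ℕ) → (Fin n → ℤ) := fun x i => (x i : ℤ) with hι
  set ℓ : (Fin n → ℕ) → Fin (n+1) := fun x => gl (Uof (ι x)) with hℓ
  have F1 : ∀ (V : Set (Fin n → ℤ)) (i : Fin n), gl V = Fin.succ i →
      ∃ u ∈ V, (N:ℤ) ≤ u i := by
    intro V i h
    rw [hgl] at h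
    simp only at h
    by_cases hex : ∃ i : Fin n, ∃ u ∈ V, (N:ℤ) ≤ u i
    · rw [dif_pos hex] at h
      have hi : hex.choose = i := Fin.succ_injective _ h
      rw [← hi]
      exact hex.choose_spec
    · rw [dif_neg hex] at h
      exact absurd h.symm (Fin.succ_ne_zero i)
  have F2 : ∀ (V : Set (Fin n → ℤ)), (∃ i : Fin n, ∃ u ∈ V, (N:ℤ) ≤ u i) → gl V ≠ 0 := by
    intro V hex
    rw [hgl]
    simp only
    rw [dif_pos hex]
    exact Fin.succ_ne_zero _
  have hα : ∀ x : Fin n → ℕ, (∀ i, x i ≤ N) → ∀ i : Fin n, x i = 0 → ℓ x ≠ i.succ := by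
    intro x hx i hxi heq
    obtain ⟨u, huV, hui⟩ := F1 (Uof (ι x)) i heq
    have hd := hB _ (hUof (ι x)) u huV (ι x) (hmem (ι x))
    have hco := coord_le_dist n u (ι x) i
    have hNle : (N:ℝ) ≤ |(u i : ℝ) - ((ι x i : ℤ) : ℝ)| := by
      have h0 : ((ι x i : ℤ) : ℝ) = 0 := by rw [hι]; simp [hxi]
      rw [h0, sub_zero]
      have h1 : ((N:ℕ):ℝ) ≤ (u i : ℝ) := by exact_mod_cast hui
      exact le_trans h1 (le_abs_self _)
    linarith
  have hβ : ∀ x : Fin n → ℕ, (∀ i, x i ≤ N) → (∃ i, x i = N) → ℓ x ≠ 0 := by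
    rintro x hx ⟨i, hxi⟩
    apply F2
    refine ⟨i, ι x, hmem (ι x), ?_⟩
    rw [hι]
    simp [hxi]
  have hsum := rainbow_sum n N hN ℓ hα hβ
  have hex : ∃ p : (Fin n → Fin N) × Equiv.Perm (Fin n),
      Function.Surjective (fun k => ℓ (vtx (fun i => (p.1 i : ℕ)) p.2 k)) := by
    by_contra hno
    push_neg at hno
    rw [Finset.sum_congr rfl (fun p _ => if_neg (hno p))] at hsum
    simp at hsum
  obtain ⟨⟨z, σ⟩, hsurj⟩ := hex
  have hinj : Function.Injective (fun k : Fin (n+1) => ℓ (vtx (fun i => (z i : ℕ)) σ k)) :=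
    Finite.injective_iff_surjective.2 hsurj
  set x0 : Fin n → ℤ := ι (vtx (fun i => (z i : ℕ)) σ 0) with hx0
  set Us : Fin (n+1) → Set (Fin n → ℤ) :=
    fun k => Uof (ι (vtx (fun i => (z i : ℕ)) σ k)) with hUs
  have hUinj : Function.Injective Us := by
    intro k k' h
    apply hinj
    show gl (Us k) = gl (Us k')
    rw [h]
  have hvtx0 : ∀ i, vtx (fun i => (z i : ℕ)) σ 0 i = (z i : ℕ) := by
    intro i
    simp only [vtx]
    rw [if_neg (by simp)]
    omega
  have hUsM : ∀ k, Us k ∈ {U | U ∈ 𝒰 ∧ ∃ y ∈ U, eucDistZ n x0 y ≤ (n:ℝ)} := by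
    intro k
    refine ⟨hUof _, ι (vtx (fun i => (z i : ℕ)) σ k), hmem _, ?_⟩
    have hd := dist_le_of_coord n x0 (ι (vtx (fun i => (z i : ℕ)) σ k)) 1 zero_le_one ?_
    · rw [mul_one] at hd
      exact hd
    · intro i
      have hv0 : x0 i = ((z i : ℕ) : ℤ) := by
        rw [hx0, hι]
        simp only
        rw [hvtx0 i]
      have hvk : ι (vtx (fun i => (z i : ℕ)) σ k) i = ((z i : ℕ) : ℤ)
          + (if ((σ.symm i : ℕ) < (k : ℕ)) then 1 else 0) := by
        rw [hι]
        simp only [vtx]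
        split <;> push_cast <;> ring
      have hint : |x0 i - ι (vtx (fun i => (z i : ℕ)) σ k) i| ≤ 1 := by
        rw [hv0, hvk]
        split <;> simp
      have := (@Int.cast_le ℝ _ _ _).2 hint
      rwa [Int.cast_abs, Int.cast_sub, Int.cast_one] at this
  obtain ⟨hfin, hcard⟩ := hmult x0
  have hra : Set.range Us ⊆ {U | U ∈ 𝒰 ∧ ∃ y ∈ U, eucDistZ n x0 y ≤ (n:ℝ)} :=
    Set.range_subset_iff.2 hUsM
  have h1 : (Set.range Us).ncard = n + 1 := by
    rw [← Set.image_univ, Set.ncard_image_of_injective _ hUinj, Set.ncard_univ,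
      Nat.card_eq_fintype_card, Fintype.card_fin]
  have h2 : (Set.range Us).ncard ≤
      ({U | U ∈ 𝒰 ∧ ∃ y ∈ U, eucDistZ n x0 y ≤ (n:ℝ)}).ncard :=
    Set.ncard_le_ncard hra hfin
  rw [h1] at h2
  have h3 : n - 1 + 1 = n := Nat.sub_add_cancel hn
  omega


end AsdimProof

/-- The asymptotic dimension of `ℤⁿ` is exactly `n`. -/
theorem asdim_int_pow (n : ℕ) (hn : 1 ≤ n) :
    AsdimLE (eucDistZ n) n ∧ ¬ AsdimLE (eucDistZ n) (n - 1) :=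
  ⟨AsdimProof.asdim_upper n hn, AsdimProof.asdim_lower n hn⟩
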